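/- Let X be a finite partially ordered set whose comparability graph G is connected, let T be a spanning tree of G, and let R be a ring. If a multiplicative automorphism ξ of I(X,R) is a fractional automorphism and satisfies ξ(e_{xy}) = e_{xy} for every tree edge x < y, then ξ is the identity automorphism. -/

import Mathlib

/-- A ring automorphism of the incidence algebra is *multiplicative* if it fixes every
function supported on the diagonal and maps functions vanishing on the diagonal to
functions vanishing on the diagonal. -/
def IsMultAut {X R : Type*} [Preorder X] [LocallyFiniteOrder X] [DecidableEq X] [Ring R]
    (φ : RingAut (IncidenceAlgebra R X)) : Prop :=
  (∀ f : IncidenceAlgebra R X, (∀ x y : X, x ≠ y → f x y = 0) → φ f = f) ∧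
  (∀ f : IncidenceAlgebra R X, (∀ x : X, f x x = 0) → ∀ x : X, (φ f) x x = 0)

/-- An automorphism of the incidence algebra is a *fractional automorphism* if it is the
inner automorphism given by a diagonal unit whose diagonal entries are invertible central
elements of `R`. -/
def IsFracAut {X R : Type*} [Preorder X] [LocallyFiniteOrder X] [DecidableEq X] [Ring R]
    (φ : RingAut (IncidenceAlgebra R X)) : Prop :=
  ∃ (v : X → R) (d : (IncidenceAlgebra R X)ˣ),
    (∀ x : X, v x ∈ Set.center R ∧ IsUnit (v x)) ∧
    (∀ x : X, (d : IncidenceAlgebra R X) x x = v x) ∧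
    (∀ x y : X, x ≠ y → (d : IncidenceAlgebra R X) x y = 0) ∧
    (∀ f : IncidenceAlgebra R X, φ f = ↑d⁻¹ * f * ↑d)

/-- The comparability graph of a partially ordered set: `x` and `y` are adjacent iff
they are distinct and comparable. -/
def compGraph (X : Type*) [PartialOrder X] : SimpleGraph X where
  Adj x y := x < y ∨ y < x
  symm := ⟨fun _ _ h => h.symm⟩
  loopless := ⟨fun x h => h.elim (lt_irrefl x) (lt_irrefl x)⟩

/-- The element `e_{xy}` of the incidence algebra: value `1` at `(x, y)` and `0`
elsewhere. -/
def eSingle {X : Type*} (R : Type*) [Ring R] [PartialOrder X] [DecidableEq X]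
    (x y : X) (h : x ≤ y) : IncidenceAlgebra R X :=
  ⟨fun s t => if s = x ∧ t = y then 1 else 0, fun s t hst => by
    try dsimp only
    split_ifs with h'
    · exact absurd ((h'.1.trans_le h).trans_eq h'.2.symm) hst
    · rfl⟩



open Finset


section Aux
variable {X R : Type*} [PartialOrder X] [LocallyFiniteOrder X] [DecidableEq X] [Ring R]

/-- Left multiplication by an element that is "diagonal at the left endpoint". -/
lemma diag_mul_apply (E f : IncidenceAlgebra R X)
    (hE : ∀ x y : X, x ≠ y → E x y = 0) (x y : X) (hxy : x ≤ y) :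
    (E * f) x y = E x x * f x y := by
  rw [IncidenceAlgebra.mul_apply]
  refine Finset.sum_eq_single_of_mem x (mem_Icc.2 ⟨le_refl x, hxy⟩) fun z hz hne => ?_
  rw [hE x z (Ne.symm hne), zero_mul]

lemma mul_diag_apply (f D : IncidenceAlgebra R X)
    (hD : ∀ x y : X, x ≠ y → D x y = 0) (x y : X) (hxy : x ≤ y) :
    (f * D) x y = f x y * D y y := by
  rw [IncidenceAlgebra.mul_apply]
  refine Finset.sum_eq_single_of_mem y (mem_Icc.2 ⟨hxy, le_refl y⟩) fun z hz hne => ?_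
  rw [hD z y hne, mul_zero]

end Aux

theorem frac_aut_fixing_tree_is_id {X R : Type*} [PartialOrder X] [Fintype X]
    [LocallyFiniteOrder X] [DecidableEq X] [Ring R]
    (hG : (compGraph X).Connected)
    (T : SimpleGraph X) (hT : T ≤ compGraph X) (hTconn : T.Connected)
    (hTacyc : T.IsAcyclic)
    (ξ : RingAut (IncidenceAlgebra R X)) (hξmult : IsMultAut ξ) (hξfrac : IsFracAut ξ)
    (hfix : ∀ (x y : X) (h : x < y), T.Adj x y →
      ξ (eSingle R x y h.le) = eSingle R x y h.le) :
    ξ = 1 := by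
  obtain ⟨v, d, hv, hdd, hd0, hφ⟩ := hξfrac
  set D : IncidenceAlgebra R X := ↑d with hD
  set E : IncidenceAlgebra R X := ↑(d⁻¹) with hE
  have hDE : D * E = 1 := by exact_mod_cast d.mul_inv
  have hED : E * D = 1 := by exact_mod_cast d.inv_mul
  set u : X → R := fun x => E x x with hu
  -- E is diagonal
  have hE0 : ∀ x y : X, x ≠ y → E x y = 0 := by
    intro x y hxy
    by_cases hle : x ≤ y
    · have h1 : (D * E) x y = v x * E x y := by
        rw [IncidenceAlgebra.mul_apply]
        rw [← hdd x]
        refine Finset.sum_eq_single_of_mem x (mem_Icc.2 ⟨le_refl x, hle⟩) fun z hz hne => ?_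
        rw [hd0 x z (Ne.symm hne), zero_mul]
      have h2 : v x * E x y = 0 := by
        rw [← h1, hDE, IncidenceAlgebra.one_apply, if_neg hxy]
      have := (hv x).2.mul_left_cancel (b := E x y) (c := 0) (by rw [h2, mul_zero])
      exact this
    · exact IncidenceAlgebra.apply_eq_zero_of_not_le hle E
  -- diagonal relations
  have hvu : ∀ x : X, v x * u x = 1 := by
    intro x
    have : (D * E) x x = v x * u x := by
      rw [IncidenceAlgebra.mul_apply, Finset.Icc_self, Finset.sum_singleton, hdd]
    rw [← this, hDE, IncidenceAlgebra.one_apply, if_pos rfl]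
  have huv : ∀ x : X, u x * v x = 1 := by
    intro x
    have : (E * D) x x = u x * v x := by
      rw [IncidenceAlgebra.mul_apply, Finset.Icc_self, Finset.sum_singleton, hdd]
    rw [← this, hED, IncidenceAlgebra.one_apply, if_pos rfl]
  -- formula for ξ
  have hform : ∀ (f : IncidenceAlgebra R X) (x y : X), x ≤ y →
      (ξ f) x y = u x * f x y * v y := by
    intro f x y hxy
    rw [hφ f]
    rw [mul_diag_apply _ _ hd0 x y hxy, diag_mul_apply _ _ hE0 x y hxy, hdd]
  -- v is constant along tree edges
  have hadj : ∀ a b : X, T.Adj a b → v a = v b := by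
    have key : ∀ a b : X, a < b → T.Adj a b → v a = v b := by
      intro a b hab hadj
      have h1 := congrArg (fun g : IncidenceAlgebra R X => g a b) (hfix a b hab hadj)
      rw [hform _ a b hab.le] at h1
      have he : eSingle R a b hab.le a b = 1 := by
        simp [eSingle, IncidenceAlgebra.coe_mk]
      rw [he, mul_one] at h1
      -- h1 : u a * v b = 1
      calc v a = v a * (u a * v b) := by rw [h1, mul_one]
        _ = v a * u a * v b := by rw [mul_assoc]
        _ = v b := by rw [hvu a, one_mul]
    intro a b hadj
    rcases (hT hadj : a < b ∨ b < a) with h | h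
    · exact key a b h hadj
    · exact (key b a h hadj.symm).symm
  have hconst : ∀ a b : X, v a = v b := by
    intro a b
    obtain ⟨p⟩ := hTconn a b
    induction p with
    | nil => rfl
    | cons h p ih => exact (hadj _ _ h).trans ih
  -- conclude
  refine DFunLike.ext _ _ fun f => ?_
  show ξ f = f
  ext a b hab
  rw [hform f a b hab]
  have hc : f a b * v b = v b * f a b :=
    ((Set.mem_center_iff.1 (hv b).1).comm (f a b)).symm
  calc u a * f a b * v b = u a * (v b * f a b) := by rw [mul_assoc, hc]
    _ = u a * v a * f a b := by rw [hconst b a, mul_assoc]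
    _ = f a b := by rw [huv a, one_mul]
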